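/- Let f₁,…,f_N : ℝ^{m×n} → ℝ be differentiable and suppose there exists L_* > 0 such that ‖∇f_i(X) − ∇f_i(Y)‖_* ≤ L_*‖X − Y‖ for all X, Y ∈ ℝ^{m×n} and all i (spectral norm on the right); set f := (1/N)∑_{i=1}^N f_i. Let λ ∈ [0,1), η > 0, and let X_i, M_i, V_i, D_i ∈ ℝ^{m×n} (i = 1,…,N) satisfy: ‖D_i‖ ≤ 1 and ⟨V_i, D_i⟩ = ‖V_i‖_* for each i; (1/N)∑_{i=1}^N V_i = (1/N)∑_{i=1}^N M_i; and ‖X_{[N]} − 1_N ⊗ X̄‖ ≤ √N λ η/(1−λ), where X̄ is the average of the X_i. Then, with X̄⁺ := X̄ − η D̄ where D̄ := (1/N)∑_{i=1}^N D_i, it holds that f(X̄⁺) ≤ f(X̄) − η‖(1/N)∑_{i=1}^N ∇f_i(X_i)‖_* + 2η‖∇F(X_{[N]}) − M_{[N]}‖_* + 2η‖V_{[N]} − 1_N ⊗ V̄‖_* + (√N λ/(1−λ) + 1/2) L_* η², where ∇F(X_{[N]}) := [∇f₁(X₁)ᵀ,…,∇f_N(X_N)ᵀ]ᵀ and V̄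 := (1/N)∑_{i=1}^N V_i. -/

import Mathlib

open Matrix Kronecker

/-- Spectral norm: ℓ²→ℓ² operator norm of a real matrix. -/
noncomputable def specNorm {ι κ : Type*} [Fintype ι] [Fintype κ] [DecidableEq κ]
    (A : Matrix ι κ ℝ) : ℝ :=
  ‖LinearMap.toContinuousLinearMap (Matrix.toEuclideanLin A)‖

open scoped ComplexOrder in
/-- The positive semidefinite square root (Mathlib's former `Matrix.PosSemidef.sqrt`). -/
noncomputable def Matrix.PosSemidef.sqrt {n 𝕜 : Type*} [Fintype n] [DecidableEq n] [RCLike 𝕜]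
    {A : Matrix n n 𝕜} (hA : A.PosSemidef) : Matrix n n 𝕜 :=
  hA.1.eigenvectorUnitary.1 * diagonal ((↑) ∘ (√·) ∘ hA.1.eigenvalues) *
    (star hA.1.eigenvectorUnitary : Matrix n n 𝕜)

/-- Nuclear norm: trace of the positive semidefinite square root of `Aᵀ * A`. -/
noncomputable def nucNorm {ι κ : Type*} [Fintype ι] [Fintype κ] [DecidableEq κ]
    (A : Matrix ι κ ℝ) : ℝ :=
  Matrix.trace (Matrix.posSemidef_conjTranspose_mul_self A).sqrt

/-- Frobenius norm. -/
noncomputable def frobNorm {ι κ : Type*} [Fintype ι] [Fintype κ] (A : Matrix ι κ ℝ) : ℝ :=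
  Real.sqrt (∑ i, ∑ j, (A i j) ^ 2)

/-- Trace inner product `⟨A, B⟩ = trace (Aᵀ B)`. -/
noncomputable def tin {ι κ : Type*} [Fintype ι] [Fintype κ] (A B : Matrix ι κ ℝ) : ℝ :=
  Matrix.trace (Aᵀ * B)

/-- Vertical stacking of `N` matrices of size `m × n`. -/
def vstack {N m n : ℕ} (Y : Fin N → Matrix (Fin m) (Fin n) ℝ) :
    Matrix (Fin N × Fin m) (Fin n) ℝ :=
  fun p j => Y p.1 p.2 j

set_option linter.unusedSectionVars false
set_option linter.unusedVariables false
set_option maxHeartbeats 1600000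

section aux
open scoped Matrix.Norms.L2Operator
lemma specNorm_eq {ι κ : Type*} [Fintype ι] [Fintype κ] [DecidableEq κ] (A : Matrix ι κ ℝ) :
    specNorm A = ‖A‖ := rfl
noncomputable def l2 {ι : Type*} [Fintype ι] (v : ι → ℝ) : ℝ :=
  ‖(WithLp.equiv 2 (ι → ℝ)).symm v‖

variable {ι κ : Type*} [Fintype ι] [Fintype κ] [DecidableEq ι] [DecidableEq κ]

lemma l2_eq (v : ι → ℝ) : l2 v = Real.sqrt (∑ i, (v i)^2) := by
  rw [l2, EuclideanSpace.norm_eq]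
  congr 1; refine Finset.sum_congr rfl fun i _ => ?_
  rw [Real.norm_eq_abs, sq_abs]; rfl

lemma l2_mulVec_le (A : Matrix ι κ ℝ) (v : κ → ℝ) :
    l2 (A *ᵥ v) ≤ specNorm A * l2 v := by
  have := Matrix.l2_opNorm_mulVec A ((WithLp.equiv 2 (κ → ℝ)).symm v)
  simpa [specNorm_eq, l2] using this

lemma specNorm_le_of {c : ℝ} (hc : 0 ≤ c) (A : Matrix ι κ ℝ)
    (h : ∀ v : κ → ℝ, l2 (A *ᵥ v) ≤ c * l2 v) : specNorm A ≤ c := by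
  rw [specNorm_eq, Matrix.l2_opNorm_def]
  refine ContinuousLinearMap.opNorm_le_bound _ hc fun x => ?_
  simpa [l2, Matrix.toEuclideanLin_apply] using h ((WithLp.equiv 2 (κ → ℝ)) x)

lemma specNorm_nonneg (A : Matrix ι κ ℝ) : 0 ≤ specNorm A := by
  rw [specNorm_eq]; exact norm_nonneg _

lemma tin_eq (A B : Matrix ι κ ℝ) : tin A B = ∑ j, ∑ i, A i j * B i j := by
  simp [tin, Matrix.trace, Matrix.diag, Matrix.mul_apply, Matrix.transpose_apply]

lemma nucNorm_eq_sum (A : Matrix ι κ ℝ) :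
    nucNorm A = ∑ k, Real.sqrt ((Matrix.posSemidef_conjTranspose_mul_self A).1.eigenvalues k) := by
  unfold nucNorm
  rw [Matrix.PosSemidef.sqrt, Matrix.trace_mul_cycle, Unitary.coe_star_mul_self, Matrix.one_mul,
    Matrix.trace_diagonal]
  simp [RCLike.ofReal]

section dual
variable (A : Matrix ι κ ℝ)

private noncomputable def Umat : Matrix κ κ ℝ :=
  ((Matrix.posSemidef_conjTranspose_mul_self A).1.eigenvectorUnitary : Matrix κ κ ℝ)

private noncomputable def dvec : κ → ℝ :=
  (Matrix.posSemidef_conjTranspose_mul_self A).1.eigenvalues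

lemma Umat_mul_transpose : Umat A * (Umat A)ᵀ = 1 := by
  have := Unitary.coe_mul_star_self
    ((Matrix.posSemidef_conjTranspose_mul_self A).1.eigenvectorUnitary)
  simpa only [Umat, Unitary.coe_star, Matrix.star_eq_conjTranspose,
    Matrix.conjTranspose_eq_transpose_of_trivial] using this

lemma transpose_mul_Umat : (Umat A)ᵀ * Umat A = 1 := by
  have := Unitary.coe_star_mul_self
    ((Matrix.posSemidef_conjTranspose_mul_self A).1.eigenvectorUnitary)
  simpa only [Umat, Unitary.coe_star, Matrix.star_eq_conjTranspose,
    Matrix.conjTranspose_eq_transpose_of_trivial] using this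

lemma Umat_diag : (Umat A)ᵀ * (Aᵀ * A) * Umat A = Matrix.diagonal (dvec A) := by
  have h := (Matrix.posSemidef_conjTranspose_mul_self A).1.conjStarAlgAut_star_eigenvectorUnitary
  rw [Unitary.conjStarAlgAut_star_apply] at h
  simp only [Matrix.star_eq_conjTranspose, Matrix.conjTranspose_eq_transpose_of_trivial] at h
  convert h using 2 <;> rfl
end dual

lemma AU_transpose_mul (A : Matrix ι κ ℝ) :
    (A * Umat A)ᵀ * (A * Umat A) = Matrix.diagonal (dvec A) := by
  rw [Matrix.transpose_mul, ← Umat_diag]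
  simp only [Matrix.mul_assoc]

lemma sum_sq_col_AU (A : Matrix ι κ ℝ) (k : κ) :
    ∑ i, ((A * Umat A) i k)^2 = dvec A k := by
  calc ∑ i, ((A * Umat A) i k)^2 = ((A * Umat A)ᵀ * (A * Umat A)) k k := by
        simp [Matrix.mul_apply, Matrix.transpose_apply, pow_two, mul_comm]
    _ = Matrix.diagonal (dvec A) k k := by rw [AU_transpose_mul]
    _ = dvec A k := Matrix.diagonal_apply_eq _ _

lemma sum_sq_col_U (A : Matrix ι κ ℝ) (k : κ) : ∑ j, (Umat A j k)^2 = 1 := by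
  calc ∑ j, (Umat A j k)^2 = ((Umat A)ᵀ * (Umat A)) k k := by
        simp [Matrix.mul_apply, Matrix.transpose_apply, pow_two, mul_comm]
    _ = (1 : Matrix κ κ ℝ) k k := by rw [transpose_mul_Umat]
    _ = 1 := Matrix.one_apply_eq _

lemma dvec_nonneg (A : Matrix ι κ ℝ) (k : κ) : 0 ≤ dvec A k :=
  (Matrix.posSemidef_conjTranspose_mul_self A).eigenvalues_nonneg k

theorem tin_le_nuc_mul_spec (A B : Matrix ι κ ℝ) :
    tin A B ≤ nucNorm A * specNorm B := by
  have key : tin A B = tin (A * Umat A) (B * Umat A) := by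
    unfold tin
    have h1 : (A * Umat A)ᵀ * (B * Umat A) = (Umat A)ᵀ * (Aᵀ * B) * (Umat A) := by
      rw [Matrix.transpose_mul]
      simp only [Matrix.mul_assoc]
    rw [h1, Matrix.trace_mul_cycle, Umat_mul_transpose, Matrix.one_mul]
  rw [key, tin_eq, nucNorm_eq_sum, Finset.sum_mul]
  refine Finset.sum_le_sum fun k _ => ?_
  have hcs := Finset.sum_mul_sq_le_sq_mul_sq Finset.univ
    (fun i => (A * Umat A) i k) (fun i => (B * Umat A) i k)
  rw [sum_sq_col_AU] at hcs
  have h1 : ∑ i, ((A * Umat A) i k) * ((B * Umat A) i k)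
      ≤ Real.sqrt (dvec A k) * Real.sqrt (∑ i, ((B * Umat A) i k)^2) := by
    rw [← Real.sqrt_mul (dvec_nonneg A k)]
    calc ∑ i, ((A * Umat A) i k) * ((B * Umat A) i k)
        ≤ |∑ i, ((A * Umat A) i k) * ((B * Umat A) i k)| := le_abs_self _
      _ = Real.sqrt ((∑ i, ((A * Umat A) i k) * ((B * Umat A) i k))^2) :=
          (Real.sqrt_sq_eq_abs _).symm
      _ ≤ _ := Real.sqrt_le_sqrt hcs
  refine h1.trans ?_
  refine mul_le_mul_of_nonneg_left ?_ (Real.sqrt_nonneg _)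
  have hsum : ∑ i, ((B * Umat A) i k)^2 = ∑ i, ((B *ᵥ (fun j => Umat A j k)) i)^2 :=
    Finset.sum_congr rfl fun i _ => rfl
  calc Real.sqrt (∑ i, ((B * Umat A) i k)^2) = l2 (B *ᵥ (fun j => Umat A j k)) := by
        rw [l2_eq, hsum]
    _ ≤ specNorm B * l2 (fun j => Umat A j k) := l2_mulVec_le _ _
    _ = specNorm B := by rw [l2_eq, sum_sq_col_U, Real.sqrt_one, mul_one]

noncomputable def pvec (A : Matrix ι κ ℝ) : κ → ℝ :=
  fun k => if dvec A k = 0 then 0 else (Real.sqrt (dvec A k))⁻¹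

noncomputable def sandw (A : Matrix ι κ ℝ) (a : κ → ℝ) : Matrix κ κ ℝ :=
  Umat A * Matrix.diagonal a * (Umat A)ᵀ

lemma sandw_mul (A : Matrix ι κ ℝ) (a b : κ → ℝ) :
    sandw A a * sandw A b = sandw A (fun k => a k * b k) := by
  unfold sandw
  calc Umat A * Matrix.diagonal a * (Umat A)ᵀ * (Umat A * Matrix.diagonal b * (Umat A)ᵀ)
      = Umat A * Matrix.diagonal a * (((Umat A)ᵀ * Umat A) * (Matrix.diagonal b * (Umat A)ᵀ)) := by
        simp only [Matrix.mul_assoc]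
    _ = Umat A * Matrix.diagonal a * (Matrix.diagonal b * (Umat A)ᵀ) := by
        rw [transpose_mul_Umat, Matrix.one_mul]
    _ = Umat A * (Matrix.diagonal a * Matrix.diagonal b) * (Umat A)ᵀ := by
        simp only [Matrix.mul_assoc]
    _ = _ := by rw [Matrix.diagonal_mul_diagonal]

lemma sandw_transpose (A : Matrix ι κ ℝ) (a : κ → ℝ) : (sandw A a)ᵀ = sandw A a := by
  unfold sandw
  rw [Matrix.transpose_mul, Matrix.transpose_mul, Matrix.transpose_transpose,
    Matrix.diagonal_transpose, Matrix.mul_assoc]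

lemma sandw_trace (A : Matrix ι κ ℝ) (a : κ → ℝ) :
    Matrix.trace (sandw A a) = ∑ k, a k := by
  unfold sandw
  rw [Matrix.trace_mul_cycle, transpose_mul_Umat, Matrix.one_mul, Matrix.trace_diagonal]

lemma spectral_real (A : Matrix ι κ ℝ) : Aᵀ * A = sandw A (dvec A) := by
  unfold sandw
  calc Aᵀ*A = (Umat A * (Umat A)ᵀ) * (Aᵀ*A) * (Umat A * (Umat A)ᵀ) := by
        rw [Umat_mul_transpose, Matrix.one_mul, Matrix.mul_one]
    _ = Umat A * ((Umat A)ᵀ * (Aᵀ*A) * Umat A) * (Umat A)ᵀ := by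
        simp only [Matrix.mul_assoc]
    _ = _ := by rw [Umat_diag]

noncomputable def Dach (A : Matrix ι κ ℝ) : Matrix ι κ ℝ := A * sandw A (pvec A)

lemma dvec_mul_pvec (A : Matrix ι κ ℝ) (k : κ) :
    dvec A k * pvec A k = Real.sqrt (dvec A k) := by
  unfold pvec
  by_cases h : dvec A k = 0
  · simp [h]
  · rw [if_neg h]
    have hd : 0 < dvec A k := lt_of_le_of_ne (dvec_nonneg A k) (Ne.symm h)
    have hs : Real.sqrt (dvec A k) ≠ 0 := by positivity
    field_simp
    rw [Real.sq_sqrt hd.le]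

lemma tin_Dach (A : Matrix ι κ ℝ) : tin A (Dach A) = nucNorm A := by
  unfold tin Dach
  rw [← Matrix.mul_assoc, spectral_real, sandw_mul, sandw_trace, nucNorm_eq_sum]
  exact Finset.sum_congr rfl fun k _ => dvec_mul_pvec A k

lemma dot_self_mulVec {M : Matrix ι κ ℝ} (v : κ → ℝ) :
    dotProduct v ((Mᵀ * M) *ᵥ v) = dotProduct (M *ᵥ v) (M *ᵥ v) := by
  rw [← Matrix.mulVec_mulVec, dotProduct_mulVec, Matrix.vecMul_transpose]

lemma spec_Dach (A : Matrix ι κ ℝ) : specNorm (Dach A) ≤ 1 := by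
  refine specNorm_le_of zero_le_one _ fun v => ?_
  rw [one_mul]
  have hDD : (Dach A)ᵀ * Dach A = sandw A (fun k => pvec A k * dvec A k * pvec A k) := by
    unfold Dach
    rw [Matrix.transpose_mul, sandw_transpose, Matrix.mul_assoc, ← Matrix.mul_assoc Aᵀ A,
      spectral_real, ← Matrix.mul_assoc, sandw_mul, sandw_mul]
  have hq : ∀ k, pvec A k * dvec A k * pvec A k ≤ 1 := by
    intro k
    by_cases h : dvec A k = 0
    · simp [pvec, h]
    · have hd : 0 < dvec A k := lt_of_le_of_ne (dvec_nonneg A k) (Ne.symm h)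
      have hs : 0 < Real.sqrt (dvec A k) := Real.sqrt_pos.mpr hd
      have : pvec A k * dvec A k * pvec A k = 1 := by
        unfold pvec
        rw [if_neg h]
        field_simp
        rw [Real.sq_sqrt hd.le]
      exact this.le
  -- compare squares
  have key : ∑ i, ((Dach A *ᵥ v) i)^2 ≤ ∑ j, (v j)^2 := by
    have e1 : ∑ i, ((Dach A *ᵥ v) i)^2
        = dotProduct v ((sandw A (fun k => pvec A k * dvec A k * pvec A k)) *ᵥ v) := by
      rw [← hDD, dot_self_mulVec]
      simp [dotProduct, pow_two]
    have e2 : ∀ (a : κ → ℝ), dotProduct v ((sandw A a) *ᵥ v)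
        = ∑ k, a k * (((Umat A)ᵀ *ᵥ v) k)^2 := by
      intro a
      unfold sandw
      rw [← Matrix.mulVec_mulVec, ← Matrix.mulVec_mulVec, dotProduct_mulVec v (Umat A),
        ← Matrix.mulVec_transpose]
      simp [dotProduct, Matrix.mulVec_diagonal, pow_two]
      exact Finset.sum_congr rfl fun k _ => by ring
    rw [e1, e2]
    have e3 : ∑ j, (v j)^2 = ∑ k, (((Umat A)ᵀ *ᵥ v) k)^2 := by
      have := dot_self_mulVec (M := (Umat A)ᵀ) v
      rw [Matrix.transpose_transpose, Umat_mul_transpose, Matrix.one_mulVec] at this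
      simpa [dotProduct, pow_two] using this
    rw [e3]
    exact Finset.sum_le_sum fun k _ =>
      mul_le_of_le_one_left (sq_nonneg _) (hq k)
  calc l2 (Dach A *ᵥ v) = Real.sqrt (∑ i, ((Dach A *ᵥ v) i)^2) := l2_eq _
    _ ≤ Real.sqrt (∑ j, (v j)^2) := Real.sqrt_le_sqrt key
    _ = l2 v := (l2_eq _).symm

-- tin bilinearity
lemma tin_smul_left (c : ℝ) (A B : Matrix ι κ ℝ) : tin (c • A) B = c * tin A B := by
  simp [tin_eq, Finset.mul_sum, Matrix.smul_apply, smul_eq_mul, mul_assoc]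

lemma tin_smul_right (c : ℝ) (A B : Matrix ι κ ℝ) : tin A (c • B) = c * tin A B := by
  simp [tin_eq, Finset.mul_sum, Matrix.smul_apply, smul_eq_mul]
  exact Finset.sum_congr rfl fun j _ => Finset.sum_congr rfl fun i _ => by ring

lemma tin_add_left (A B C : Matrix ι κ ℝ) : tin (A + B) C = tin A C + tin B C := by
  simp [tin_eq, Matrix.add_apply, add_mul, Finset.sum_add_distrib]

lemma tin_add_right (A B C : Matrix ι κ ℝ) : tin A (B + C) = tin A B + tin A C := by
  simp [tin_eq, Matrix.add_apply, mul_add, Finset.sum_add_distrib]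

lemma tin_neg_left (A B : Matrix ι κ ℝ) : tin (-A) B = -tin A B := by
  simp [tin_eq, Matrix.neg_apply, Finset.sum_neg_distrib]

lemma tin_neg_right (A B : Matrix ι κ ℝ) : tin A (-B) = -tin A B := by
  simp [tin_eq, Matrix.neg_apply, Finset.sum_neg_distrib]

lemma tin_sub_left (A B C : Matrix ι κ ℝ) : tin (A - B) C = tin A C - tin B C := by
  rw [sub_eq_add_neg, tin_add_left, tin_neg_left, sub_eq_add_neg]

lemma tin_sum_left {σ : Type*} (s : Finset σ) (A : σ → Matrix ι κ ℝ) (B : Matrix ι κ ℝ) :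
    tin (∑ i ∈ s, A i) B = ∑ i ∈ s, tin (A i) B := by
  classical
  induction s using Finset.induction_on with
  | empty => simp [tin_eq]
  | insert _ _ h ih => rw [Finset.sum_insert h, tin_add_left, ih, Finset.sum_insert h]

lemma tin_sum_right {σ : Type*} (s : Finset σ) (A : Matrix ι κ ℝ) (B : σ → Matrix ι κ ℝ) :
    tin A (∑ i ∈ s, B i) = ∑ i ∈ s, tin A (B i) := by
  classical
  induction s using Finset.induction_on with
  | empty => simp [tin_eq]
  | insert _ _ h ih => rw [Finset.sum_insert h, tin_add_right, ih, Finset.sum_insert h]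

-- specNorm lemmas
lemma specNorm_neg (A : Matrix ι κ ℝ) : specNorm (-A) = specNorm A := by
  rw [specNorm_eq, specNorm_eq, norm_neg]

lemma specNorm_smul (c : ℝ) (A : Matrix ι κ ℝ) : specNorm (c • A) = |c| * specNorm A := by
  rw [specNorm_eq, specNorm_eq, norm_smul, Real.norm_eq_abs]

lemma specNorm_add_le (A B : Matrix ι κ ℝ) : specNorm (A + B) ≤ specNorm A + specNorm B := by
  simp only [specNorm_eq]; exact norm_add_le _ _

lemma specNorm_sum_le {σ : Type*} (s : Finset σ) (A : σ → Matrix ι κ ℝ) :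
    specNorm (∑ i ∈ s, A i) ≤ ∑ i ∈ s, specNorm (A i) := by
  simp only [specNorm_eq]; exact norm_sum_le _ _

lemma specNorm_sub_comm (A B : Matrix ι κ ℝ) : specNorm (A - B) = specNorm (B - A) := by
  rw [← specNorm_neg, neg_sub]

-- nucNorm lemmas
lemma nucNorm_nonneg (A : Matrix ι κ ℝ) : 0 ≤ nucNorm A := by
  rw [nucNorm_eq_sum]
  exact Finset.sum_nonneg fun k _ => Real.sqrt_nonneg _

lemma tin_le_nuc {A B : Matrix ι κ ℝ} (hB : specNorm B ≤ 1) : tin A B ≤ nucNorm A :=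
  (tin_le_nuc_mul_spec A B).trans (mul_le_of_le_one_right (nucNorm_nonneg A) hB)

lemma nucNorm_neg (A : Matrix ι κ ℝ) : nucNorm (-A) = nucNorm A := by
  have le1 : ∀ C : Matrix ι κ ℝ, nucNorm (-C) ≤ nucNorm C := by
    intro C
    rw [← tin_Dach (-C), tin_neg_left, ← tin_neg_right]
    exact tin_le_nuc (by rw [specNorm_neg]; exact spec_Dach _)
  have := le1 (-A)
  rw [neg_neg] at this
  exact le_antisymm (le1 A) this

lemma neg_nuc_le_tin {A B : Matrix ι κ ℝ} (hB : specNorm B ≤ 1) : -nucNorm A ≤ tin A B := by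
  have := tin_le_nuc (A := -A) hB
  rw [tin_neg_left, nucNorm_neg] at this
  linarith

lemma abs_tin_le {A B : Matrix ι κ ℝ} (hB : specNorm B ≤ 1) : |tin A B| ≤ nucNorm A :=
  abs_le.mpr ⟨neg_nuc_le_tin hB, tin_le_nuc hB⟩

lemma nucNorm_add_le (A B : Matrix ι κ ℝ) : nucNorm (A + B) ≤ nucNorm A + nucNorm B := by
  rw [← tin_Dach (A + B), tin_add_left]
  exact add_le_add (tin_le_nuc (spec_Dach _)) (tin_le_nuc (spec_Dach _))

lemma nucNorm_sub_comm (A B : Matrix ι κ ℝ) : nucNorm (A - B) = nucNorm (B - A) := by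
  rw [← nucNorm_neg, neg_sub]

lemma nucNorm_smul_nonneg {c : ℝ} (hc : 0 ≤ c) (A : Matrix ι κ ℝ) :
    nucNorm (c • A) = c * nucNorm A := by
  refine le_antisymm ?_ ?_
  · rw [← tin_Dach (c • A), tin_smul_left]
    exact mul_le_mul_of_nonneg_left (tin_le_nuc (spec_Dach _)) hc
  · rw [← tin_Dach A, ← tin_smul_left]
    exact tin_le_nuc (spec_Dach _)

lemma nucNorm_sum_le {σ : Type*} (s : Finset σ) (A : σ → Matrix ι κ ℝ) :
    nucNorm (∑ i ∈ s, A i) ≤ ∑ i ∈ s, nucNorm (A i) := by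
  rw [← tin_Dach (∑ i ∈ s, A i), tin_sum_left]
  exact Finset.sum_le_sum fun i _ => tin_le_nuc (spec_Dach _)

lemma nucNorm_le_add_sub (A B : Matrix ι κ ℝ) : nucNorm A ≤ nucNorm B + nucNorm (A - B) := by
  have h := nucNorm_add_le B (A - B)
  rwa [add_sub_cancel] at h

lemma nucNorm_sub_le (A B C : Matrix ι κ ℝ) :
    nucNorm (A - C) ≤ nucNorm (A - B) + nucNorm (B - C) := by
  have h := nucNorm_add_le (A - B) (B - C)
  rwa [sub_add_sub_cancel] at h

section blocks
variable {ρ : Type*} [Fintype ρ] [DecidableEq ρ]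

def blk (j : ρ) (S : Matrix (ρ × ι) κ ℝ) : Matrix ι κ ℝ := fun i l => S (j, i) l

def emb (j : ρ) (B : Matrix ι κ ℝ) : Matrix (ρ × ι) κ ℝ :=
  fun p l => if p.1 = j then B p.2 l else 0

lemma blk_mulVec (j : ρ) (S : Matrix (ρ × ι) κ ℝ) (v : κ → ℝ) (i : ι) :
    (blk j S *ᵥ v) i = (S *ᵥ v) (j, i) := rfl

lemma specNorm_blk_le (j : ρ) (S : Matrix (ρ × ι) κ ℝ) : specNorm (blk j S) ≤ specNorm S := by
  refine specNorm_le_of (specNorm_nonneg S) _ fun v => ?_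
  refine le_trans ?_ (l2_mulVec_le S v)
  rw [l2_eq, l2_eq]
  refine Real.sqrt_le_sqrt ?_
  calc ∑ i, ((blk j S *ᵥ v) i)^2 = ∑ i, ((S *ᵥ v) (j, i))^2 := rfl
    _ ≤ ∑ p : ρ × ι, ((S *ᵥ v) p)^2 := by
        rw [Fintype.sum_prod_type]
        exact Finset.single_le_sum (f := fun j' => ∑ i, ((S *ᵥ v) (j', i))^2)
          (fun j' _ => Finset.sum_nonneg fun i _ => sq_nonneg _) (Finset.mem_univ j)

lemma emb_mulVec (j : ρ) (B : Matrix ι κ ℝ) (v : κ → ℝ) (p : ρ × ι) :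
    (emb j B *ᵥ v) p = if p.1 = j then (B *ᵥ v) p.2 else 0 := by
  by_cases h : p.1 = j <;> simp [emb, Matrix.mulVec, dotProduct, h]

lemma specNorm_emb_le (j : ρ) (B : Matrix ι κ ℝ) : specNorm (emb j B) ≤ specNorm B := by
  refine specNorm_le_of (specNorm_nonneg B) _ fun v => ?_
  refine le_trans (le_of_eq ?_) (l2_mulVec_le B v)
  rw [l2_eq, l2_eq]
  congr 1
  rw [Fintype.sum_prod_type]
  calc ∑ j' : ρ, ∑ i, ((emb j B *ᵥ v) (j', i))^2
      = ∑ j' : ρ, ∑ i, (if j' = j then ((B *ᵥ v) i)^2 else 0) := by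
        refine Finset.sum_congr rfl fun j' _ => Finset.sum_congr rfl fun i _ => ?_
        rw [emb_mulVec]
        by_cases h : j' = j <;> simp [h]
    _ = ∑ i, ((B *ᵥ v) i)^2 := by
        rw [Finset.sum_comm]
        refine Finset.sum_congr rfl fun i _ => ?_
        simp

lemma tin_emb (j : ρ) (S : Matrix (ρ × ι) κ ℝ) (B : Matrix ι κ ℝ) :
    tin S (emb j B) = tin (blk j S) B := by
  rw [tin_eq, tin_eq]
  refine Finset.sum_congr rfl fun l _ => ?_
  rw [Fintype.sum_prod_type]
  calc ∑ j' : ρ, ∑ i, S (j', i) l * emb j B (j', i) l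
      = ∑ j' : ρ, ∑ i, (if j' = j then S (j', i) l * B i l else 0) := by
        refine Finset.sum_congr rfl fun j' _ => Finset.sum_congr rfl fun i _ => ?_
        by_cases h : j' = j <;> simp [emb, h]
    _ = ∑ i, S (j, i) l * B i l := by
        rw [Finset.sum_comm]
        refine Finset.sum_congr rfl fun i _ => ?_
        simp
    _ = ∑ i, blk j S i l * B i l := rfl

lemma nucNorm_blk_le (j : ρ) (S : Matrix (ρ × ι) κ ℝ) : nucNorm (blk j S) ≤ nucNorm S := by
  rw [← tin_Dach (blk j S), ← tin_emb]
  exact tin_le_nuc ((specNorm_emb_le j _).trans (spec_Dach _))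

end blocks

lemma abs_tin_le_mul (A B : Matrix ι κ ℝ) : |tin A B| ≤ nucNorm A * specNorm B := by
  refine abs_le.mpr ⟨?_, tin_le_nuc_mul_spec A B⟩
  have := tin_le_nuc_mul_spec (-A) B
  rw [tin_neg_left, nucNorm_neg] at this
  linarith

lemma descent (f : Matrix ι κ ℝ → ℝ) (g : Matrix ι κ ℝ → Matrix ι κ ℝ)
    (hdiff : ∀ X V, HasDerivAt (fun t : ℝ => f (X + t • V)) (tin (g X) V) 0)
    (L : ℝ) (hL : 0 ≤ L)
    (hLip : ∀ X Y, nucNorm (g X - g Y) ≤ L * specNorm (X - Y))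
    (X W : Matrix ι κ ℝ) :
    f (X + W) ≤ f X + tin (g X) W + L / 2 * (specNorm W)^2 := by
  set φ : ℝ → ℝ := fun t => f (X + t • W) with hφ
  set φ' : ℝ → ℝ := fun t => tin (g (X + t • W)) W with hφ'
  set K : ℝ := L * (specNorm W)^2 with hK
  have hK0 : 0 ≤ K := by positivity
  have hd : ∀ t : ℝ, HasDerivAt φ (φ' t) t := by
    intro t
    have h0 := hdiff (X + t • W) W
    have hshift : HasDerivAt (fun u : ℝ => u - t) 1 t := (hasDerivAt_id t).sub_const t
    have hc : HasDerivAt (fun u : ℝ => f (X + t • W + (u - t) • W)) (tin (g (X + t • W)) W * 1) t := by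
      have := HasDerivAt.comp t (by simpa using h0) hshift
      exact this
    rw [mul_one] at hc
    convert hc using 1
    funext u
    simp only [hφ]
    congr 1
    rw [sub_smul]; abel
  have hlip : ∀ s t : ℝ, |φ' t - φ' s| ≤ K * |t - s| := by
    intro s t
    have h1 : φ' t - φ' s = tin (g (X + t • W) - g (X + s • W)) W := by
      rw [tin_sub_left]
    rw [h1]
    calc |tin (g (X + t • W) - g (X + s • W)) W|
        ≤ nucNorm (g (X + t • W) - g (X + s • W)) * specNorm W := abs_tin_le_mul _ _
      _ ≤ (L * specNorm ((X + t • W) - (X + s • W))) * specNorm W :=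
          mul_le_mul_of_nonneg_right (hLip _ _) (specNorm_nonneg _)
      _ = K * |t - s| := by
          have : (X + t • W) - (X + s • W) = (t - s) • W := by
            rw [sub_smul]; abel
          rw [this, specNorm_smul, hK]; ring
  have hcont : Continuous φ' := by
    have : LipschitzWith (Real.toNNReal K) φ' := by
      refine LipschitzWith.of_dist_le_mul fun t s => ?_
      rw [Real.dist_eq, Real.dist_eq, Real.coe_toNNReal K hK0]
      exact hlip s t
    exact this.continuous
  have hintg : IntervalIntegrable φ' MeasureTheory.volume 0 1 :=
    hcont.intervalIntegrable 0 1
  have hftc : ∫ t in (0:ℝ)..1, φ' t = φ 1 - φ 0 :=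
    intervalIntegral.integral_eq_sub_of_hasDerivAt (fun t _ => hd t) hintg
  have hmono : ∫ t in (0:ℝ)..1, φ' t ≤ ∫ t in (0:ℝ)..1, (φ' 0 + K * t) := by
    refine intervalIntegral.integral_mono_on zero_le_one hintg ?_ fun t ht => ?_
    · exact (continuous_const.add (continuous_const.mul continuous_id)).intervalIntegrable 0 1
    · have := hlip 0 t
      rw [sub_zero] at this
      have habs : |φ' t - φ' 0| ≤ K * t := by
        rw [abs_of_nonneg (ht.1)] at this
        exact this
      have := abs_le.mp habs
      linarith [this.2]
  have hcomp : ∫ t in (0:ℝ)..1, (φ' 0 + K * t) = φ' 0 + K / 2 := by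
    rw [intervalIntegral.integral_add (f := fun _ => φ' 0) (g := fun t => K * t)
      (intervalIntegrable_const)
      ((continuous_const.mul continuous_id').intervalIntegrable 0 1),
      intervalIntegral.integral_const, intervalIntegral.integral_const_mul, integral_id,
      smul_eq_mul]
    ring
  have h1 : φ 1 = f (X + W) := by simp [hφ]
  have h0' : φ 0 = f X := by simp [hφ]
  have hp0 : φ' 0 = tin (g X) W := by simp [hφ']
  have := hftc ▸ hmono
  rw [hcomp, h1, h0', hp0] at this
  have : f (X + W) ≤ f X + tin (g X) W + K / 2 := by linarith
  calc f (X + W) ≤ f X + tin (g X) W + K / 2 := this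
    _ = f X + tin (g X) W + L / 2 * (specNorm W)^2 := by rw [hK]; ring

end aux

theorem stmt13 {N m n : ℕ} (hN : 0 < N)
    (f : Fin N → Matrix (Fin m) (Fin n) ℝ → ℝ)
    (g : Fin N → Matrix (Fin m) (Fin n) ℝ → Matrix (Fin m) (Fin n) ℝ)
    (hdiff : ∀ i X V, HasDerivAt (fun t : ℝ => f i (X + t • V)) (tin (g i X) V) 0)
    (L : ℝ) (hL : 0 < L)
    (hLip : ∀ i X Y, nucNorm (g i X - g i Y) ≤ L * specNorm (X - Y))
    (lam η : ℝ) (hlam0 : 0 ≤ lam) (hlam1 : lam < 1) (hη : 0 < η)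
    (X M V D : Fin N → Matrix (Fin m) (Fin n) ℝ)
    (hD : ∀ i, specNorm (D i) ≤ 1)
    (hVD : ∀ i, tin (V i) (D i) = nucNorm (V i))
    (havg : (N : ℝ)⁻¹ • ∑ i, V i = (N : ℝ)⁻¹ • ∑ i, M i)
    (hcons : specNorm (vstack X - vstack (fun _ => (N : ℝ)⁻¹ • ∑ i, X i))
      ≤ Real.sqrt N * lam * η / (1 - lam)) :
    (N : ℝ)⁻¹ * ∑ i, f i (((N : ℝ)⁻¹ • ∑ j, X j) - η • ((N : ℝ)⁻¹ • ∑ j, D j))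
      ≤ (N : ℝ)⁻¹ * ∑ i, f i ((N : ℝ)⁻¹ • ∑ j, X j)
        - η * nucNorm ((N : ℝ)⁻¹ • ∑ i, g i (X i))
        + 2 * η * nucNorm (vstack (fun i => g i (X i)) - vstack M)
        + 2 * η * nucNorm (vstack V - vstack (fun _ => (N : ℝ)⁻¹ • ∑ i, V i))
        + (Real.sqrt N * lam / (1 - lam) + 1 / 2) * L * η ^ 2 := by
  have hNR : (0:ℝ) < (N:ℝ) := by exact_mod_cast hN
  set c : ℝ := (N:ℝ)⁻¹ with hcdef
  have hc0 : 0 ≤ c := by positivity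
  have hcN : c * (N:ℝ) = 1 := inv_mul_cancel₀ hNR.ne'
  set Xb := c • ∑ j, X j with hXbdef
  set Db := c • ∑ j, D j with hDbdef
  set gb := c • ∑ i, g i (X i) with hgbdef
  set Vb := c • ∑ i, V i with hVbdef
  set Mb := c • ∑ i, M i with hMbdef
  set Gb := c • ∑ i, g i Xb with hGbdef
  set W := -(η • Db) with hWdef
  set T1 := nucNorm (vstack (fun i => g i (X i)) - vstack M) with hT1def
  set T2 := nucNorm (vstack V - vstack (fun _ => Vb)) with hT2def
  set Cns := Real.sqrt N * lam * η / (1 - lam) with hCnsdef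
  have hsumone : (∑ _i : Fin N, (1:ℝ)) = (N:ℝ) := by
    simp
  have hDb1 : specNorm Db ≤ 1 := by
    rw [hDbdef, specNorm_smul, abs_of_nonneg hc0]
    calc c * specNorm (∑ j, D j) ≤ c * ∑ j, specNorm (D j) :=
          mul_le_mul_of_nonneg_left (specNorm_sum_le _ _) hc0
      _ ≤ c * ∑ _j : Fin N, (1:ℝ) :=
          mul_le_mul_of_nonneg_left (Finset.sum_le_sum fun j _ => hD j) hc0
      _ = 1 := by rw [hsumone, hcN]
  have hspecW : specNorm W = η * specNorm Db := by
    rw [hWdef, specNorm_neg, specNorm_smul, abs_of_pos hη]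
  have hWsq : (specNorm W)^2 ≤ η^2 := by
    have h0 : 0 ≤ specNorm Db := specNorm_nonneg Db
    rw [hspecW]
    have hs2 : (specNorm Db)^2 ≤ 1 := by nlinarith
    calc (η * specNorm Db)^2 = η^2 * (specNorm Db)^2 := by ring
      _ ≤ η^2 * 1 := mul_le_mul_of_nonneg_left hs2 (sq_nonneg η)
      _ = η^2 := mul_one _
  -- per-agent descent
  have hA : ∀ i, f i (Xb - η • Db) ≤ f i Xb + tin (g i Xb) W + L/2 * (specNorm W)^2 := by
    intro i
    have hd := descent (f i) (g i) (hdiff i) L hL.le (hLip i) Xb W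
    have harg : Xb - η • Db = Xb + W := by rw [hWdef, sub_eq_add_neg]
    rw [harg]
    exact hd
  -- consensus per i
  have hconsI : ∀ i, specNorm (Xb - X i) ≤ Cns := by
    intro i
    rw [specNorm_sub_comm]
    have hblk : X i - Xb = blk i (vstack X - vstack (fun _ => Xb)) := by
      ext a b; simp [blk, vstack, Matrix.sub_apply]
    rw [hblk]
    exact (specNorm_blk_le _ _).trans hcons
  -- distance between Gb and gb
  have hGbgb : nucNorm (Gb - gb) ≤ L * Cns := by
    have hds : Gb - gb = c • ∑ i, (g i Xb - g i (X i)) := by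
      rw [hGbdef, hgbdef, ← smul_sub, ← Finset.sum_sub_distrib]
    rw [hds, nucNorm_smul_nonneg hc0]
    calc c * nucNorm (∑ i, (g i Xb - g i (X i)))
        ≤ c * ∑ i, nucNorm (g i Xb - g i (X i)) :=
          mul_le_mul_of_nonneg_left (nucNorm_sum_le _ _) hc0
      _ ≤ c * ∑ _i : Fin N, L * Cns := by
          refine mul_le_mul_of_nonneg_left (Finset.sum_le_sum fun i _ => ?_) hc0
          exact (hLip i _ _).trans (mul_le_mul_of_nonneg_left (hconsI i) hL.le)
      _ = L * Cns := by
          rw [Finset.sum_const, Finset.card_univ, Fintype.card_fin, nsmul_eq_mul,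
            ← mul_assoc, hcN, one_mul]
  -- nuclear distance gb to Mb
  have hT1b : nucNorm (gb - Mb) ≤ T1 := by
    have hds : gb - Mb = c • ∑ i, (g i (X i) - M i) := by
      rw [hgbdef, hMbdef, ← smul_sub, ← Finset.sum_sub_distrib]
    rw [hds, nucNorm_smul_nonneg hc0]
    calc c * nucNorm (∑ i, (g i (X i) - M i))
        ≤ c * ∑ i, nucNorm (g i (X i) - M i) :=
          mul_le_mul_of_nonneg_left (nucNorm_sum_le _ _) hc0
      _ ≤ c * ∑ _i : Fin N, T1 := by
          refine mul_le_mul_of_nonneg_left (Finset.sum_le_sum fun i _ => ?_) hc0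
          have hblk : g i (X i) - M i = blk i (vstack (fun i => g i (X i)) - vstack M) := by
            ext a b; simp [blk, vstack, Matrix.sub_apply]
          rw [hblk, hT1def]
          exact nucNorm_blk_le _ _
      _ = T1 := by
          rw [Finset.sum_const, Finset.card_univ, Fintype.card_fin, nsmul_eq_mul,
            ← mul_assoc, hcN, one_mul]
  have hT2b : ∀ i, nucNorm (gb - V i) ≤ nucNorm (gb - Mb) + T2 := by
    intro i
    refine (nucNorm_sub_le gb Mb (V i)).trans ?_
    have hMV : Mb = Vb := havg.symm
    have h2 : nucNorm (Mb - V i) ≤ T2 := by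
      rw [hMV, nucNorm_sub_comm]
      have hblk : V i - Vb = blk i (vstack V - vstack (fun _ => Vb)) := by
        ext a b; simp [blk, vstack, Matrix.sub_apply]
      rw [hblk, hT2def]
      exact nucNorm_blk_le _ _
    linarith
  -- lower bound for tin gb (D i)
  have hCi : ∀ i, nucNorm gb - 2 * (nucNorm (gb - Mb) + T2) ≤ tin gb (D i) := by
    intro i
    have e : tin gb (D i) = tin (V i) (D i) + tin (gb - V i) (D i) := by
      rw [← tin_add_left, add_sub_cancel]
    rw [e, hVD i]
    have h1 : nucNorm gb ≤ nucNorm (V i) + nucNorm (gb - V i) := nucNorm_le_add_sub gb (V i)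
    have h2 : -nucNorm (gb - V i) ≤ tin (gb - V i) (D i) := neg_nuc_le_tin (hD i)
    have h3 := hT2b i
    linarith
  -- lower bound for tin gb Db
  have hgbDb : nucNorm gb - 2 * (nucNorm (gb - Mb) + T2) ≤ tin gb Db := by
    have e : tin gb Db = c * ∑ i, tin gb (D i) := by
      rw [hDbdef, tin_smul_right, tin_sum_right]
    rw [e]
    have hlow : (∑ _i : Fin N, (nucNorm gb - 2 * (nucNorm (gb - Mb) + T2)))
        ≤ ∑ i, tin gb (D i) := Finset.sum_le_sum fun i _ => hCi i
    have := mul_le_mul_of_nonneg_left hlow hc0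
    calc nucNorm gb - 2 * (nucNorm (gb - Mb) + T2)
        = c * ∑ _i : Fin N, (nucNorm gb - 2 * (nucNorm (gb - Mb) + T2)) := by
          rw [Finset.sum_const, Finset.card_univ, Fintype.card_fin, nsmul_eq_mul,
            ← mul_assoc, hcN, one_mul]
      _ ≤ c * ∑ i, tin gb (D i) := this
  -- lower bound for tin Gb Db
  have hGbDb : tin gb Db - L * Cns ≤ tin Gb Db := by
    have e : tin Gb Db = tin gb Db + tin (Gb - gb) Db := by
      rw [← tin_add_left, add_sub_cancel]
    rw [e]
    have h2 : -nucNorm (Gb - gb) ≤ tin (Gb - gb) Db := neg_nuc_le_tin hDb1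
    linarith
  -- sum up descent
  have hsum : c * ∑ i, f i (Xb - η • Db)
      ≤ c * ∑ i, f i Xb + tin Gb W + L/2 * η^2 := by
    have hs := Finset.sum_le_sum fun i (_ : i ∈ Finset.univ) => hA i
    have hexp : (∑ i, (f i Xb + tin (g i Xb) W + L/2 * (specNorm W)^2))
        = ∑ i, f i Xb + ∑ i, tin (g i Xb) W + (N:ℝ) * (L/2 * (specNorm W)^2) := by
      rw [Finset.sum_add_distrib, Finset.sum_add_distrib, Finset.sum_const,
        Finset.card_univ, Fintype.card_fin, nsmul_eq_mul]
    have htin : tin Gb W = c * ∑ i, tin (g i Xb) W := by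
      rw [hGbdef, tin_smul_left, tin_sum_left]
    have hmul := mul_le_mul_of_nonneg_left (hs.trans (le_of_eq hexp)) hc0
    rw [mul_add, mul_add, ← mul_assoc, hcN, one_mul] at hmul
    have hspec2 : L/2 * (specNorm W)^2 ≤ L/2 * η^2 :=
      mul_le_mul_of_nonneg_left hWsq (by positivity)
    rw [htin]
    linarith
  have hGbW : tin Gb W = -(η * tin Gb Db) := by
    rw [hWdef, tin_neg_right, tin_smul_right]
  -- final products
  have P1 : η * (nucNorm gb - 2 * (nucNorm (gb - Mb) + T2) - L * Cns) ≤ η * tin Gb Db := by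
    refine mul_le_mul_of_nonneg_left ?_ hη.le
    linarith [hgbDb, hGbDb]
  have P1' : η * nucNorm gb - 2 * (η * nucNorm (gb - Mb)) - 2 * (η * T2) - η * (L * Cns)
      ≤ η * tin Gb Db := by
    have he : η * (nucNorm gb - 2 * (nucNorm (gb - Mb) + T2) - L * Cns)
        = η * nucNorm gb - 2 * (η * nucNorm (gb - Mb)) - 2 * (η * T2) - η * (L * Cns) := by
      ring
    linarith [P1, he.ge, he.le]
  have P2 : η * nucNorm (gb - Mb) ≤ η * T1 := mul_le_mul_of_nonneg_left hT1b hη.le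
  have P3 : η * (L * Cns) = (Real.sqrt N * lam / (1 - lam)) * L * η^2 := by
    rw [hCnsdef]; ring
  linarith [hsum, hGbW.le, hGbW.ge, P1', P2, P3.le, P3.ge]
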